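/- Let φ : ℝⁿ → ℝ be convex, f : ℝⁿ → ℝ be differentiable at x, and let G be a symmetric n×n real matrix with ⟨d, G d⟩ ≥ μ‖d‖² for all d ∈ ℝⁿ, where μ > 0. Let x̂ ∈ ℝⁿ, d := x̂ − x, r(x) := x − prox_φ(x − ∇f(x)), and R(x̂) := x̂ − prox_φ(x̂ − ∇f(x) − G d). If ‖R(x̂)‖ ≤ θ‖r(x)‖ for some θ ∈ (0,1), then (μ / ((1 + ‖G‖)(1 + θ)))·‖d‖ ≤ ‖r(x)‖ ≤ ((1 + ‖G‖)/(1 − θ))·‖d‖, where ‖G‖ denotes the operator (spectral) norm of G. -/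

import Mathlib

open scoped RealInnerProductSpace

noncomputable section

/-- The proximity operator `prox_g(z)`. -/
noncomputable def proxPt {n : ℕ} (g : EuclideanSpace ℝ (Fin n) → ℝ)
    (z : EuclideanSpace ℝ (Fin n)) : EuclideanSpace ℝ (Fin n) :=
  Classical.epsilon fun p => ∀ y, g p + (1 / 2) * ‖p - z‖ ^ 2 ≤ g y + (1 / 2) * ‖y - z‖ ^ 2


lemma halfNormSq_convexOn {n : ℕ} (z : EuclideanSpace ℝ (Fin n)) :
    ConvexOn ℝ Set.univ (fun y : EuclideanSpace ℝ (Fin n) => (1 / 2) * ‖y - z‖ ^ 2) := by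
  refine ⟨convex_univ, fun u _ v _ a b ha hb hab => ?_⟩
  simp only [smul_eq_mul]
  have hz : a • u + b • v - z = a • (u - z) + b • (v - z) := by
    rw [smul_sub, smul_sub, show a • u - a • z + (b • v - b • z)
      = a • u + b • v - (a • z + b • z) from by abel, ← add_smul, hab, one_smul]
  have key : ‖a • u + b • v - z‖ ^ 2 ≤ a * ‖u - z‖ ^ 2 + b * ‖v - z‖ ^ 2 := by
    rw [hz, norm_add_sq_real, norm_smul, norm_smul, real_inner_smul_left,
      real_inner_smul_right, Real.norm_eq_abs, Real.norm_eq_abs,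
      abs_of_nonneg ha, abs_of_nonneg hb]
    have hb1 : b = 1 - a := by linarith
    subst hb1
    nlinarith [mul_nonneg (mul_nonneg ha hb) (sq_nonneg (‖u - z‖ - ‖v - z‖)),
      mul_le_mul_of_nonneg_left (real_inner_le_norm (u - z) (v - z)) (mul_nonneg ha hb),
      norm_nonneg (u - z), norm_nonneg (v - z)]
  linarith


lemma proxPt_exists {n : ℕ} (φ : EuclideanSpace ℝ (Fin n) → ℝ)
    (hφ : ConvexOn ℝ Set.univ φ) (z : EuclideanSpace ℝ (Fin n)) :
    ∃ p : EuclideanSpace ℝ (Fin n),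
      ∀ y, φ p + (1 / 2) * ‖p - z‖ ^ 2 ≤ φ y + (1 / 2) * ‖y - z‖ ^ 2 := by
  set h : EuclideanSpace ℝ (Fin n) → ℝ := fun y => φ y + (1 / 2) * ‖y - z‖ ^ 2 with hh
  have hconv : ConvexOn ℝ Set.univ h := hφ.add (halfNormSq_convexOn z)
  have hcontφ : Continuous φ := by
    exact continuousOn_univ.1 (hφ.continuousOn isOpen_univ)
  have hcont : Continuous h := by
    apply hcontφ.add
    continuity
  obtain ⟨C, hC⟩ := (isCompact_closedBall z 1).exists_bound_of_continuousOn
    hcontφ.continuousOn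
  have hzC : |φ z| ≤ C := by
    simpa using hC z (Metric.mem_closedBall_self zero_le_one)
  have hC0 : 0 ≤ C := le_trans (abs_nonneg _) hzC
  -- affine lower bound for φ
  have hlb : ∀ y : EuclideanSpace ℝ (Fin n), -C - 2 * C * ‖y - z‖ ≤ φ y := by
    intro y
    by_cases hy : ‖y - z‖ ≤ 1
    · have hyC : |φ y| ≤ C := by
        simpa using hC y (by simpa [Metric.mem_closedBall, dist_eq_norm] using hy)
      nlinarith [abs_le.1 hyC, norm_nonneg (y - z)]
    · push_neg at hy
      set t : ℝ := ‖y - z‖ with htdef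
      have ht0 : (0:ℝ) < t := lt_trans one_pos hy
      set u := z + t⁻¹ • (y - z) with hu
      have hu1 : ‖u - z‖ ≤ 1 := by
        rw [hu, add_sub_cancel_left, norm_smul, Real.norm_eq_abs,
          abs_of_nonneg (inv_nonneg.2 ht0.le), ← htdef, inv_mul_cancel₀ ht0.ne']
      have huC : |φ u| ≤ C := by
        simpa using hC u (by simpa [Metric.mem_closedBall, dist_eq_norm] using hu1)
      have hti : t⁻¹ ≤ 1 := by
        rw [inv_le_one_iff₀]; right; exact hy.le
      have hcv : φ u ≤ (1 - t⁻¹) * φ z + t⁻¹ * φ y := by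
        have hueq : u = (1 - t⁻¹) • z + t⁻¹ • y := by
          rw [hu, sub_smul, one_smul, smul_sub]; abel
        rw [hueq]
        exact hφ.2 (Set.mem_univ z) (Set.mem_univ y) (by linarith)
          (inv_nonneg.2 ht0.le) (by ring)
      have key : t * φ u ≤ (t - 1) * φ z + φ y := by
        have h1 : t * ((1 - t⁻¹) * φ z + t⁻¹ * φ y) = (t - 1) * φ z + φ y := by
          field_simp
        have := mul_le_mul_of_nonneg_left hcv ht0.le
        rwa [h1] at this
      nlinarith [key, hC0, hy,
        mul_le_mul_of_nonneg_left (abs_le.1 huC).1 ht0.le,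
        mul_le_mul_of_nonneg_left (abs_le.1 hzC).2 (by linarith : (0:ℝ) ≤ t - 1)]
  -- minimize over a large closed ball
  set R : ℝ := 4 * C + 3 with hRdef
  have hRpos : (0:ℝ) < R := by simp only [hRdef]; linarith
  obtain ⟨p, hpball, hpmin⟩ := (isCompact_closedBall z R).exists_isMinOn
    ⟨z, Metric.mem_closedBall_self hRpos.le⟩ hcont.continuousOn
  have hpz : h p ≤ h z := hpmin (Metric.mem_closedBall_self hRpos.le)
  have hpr : ‖p - z‖ < R := by
    have h1 := hlb p
    have h2 : φ p + (1/2) * ‖p - z‖^2 ≤ φ z := by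
      simpa [hh] using hpz
    simp only [hRdef]
    nlinarith [norm_nonneg (p - z), (abs_le.1 hzC).2, hC0]
  have hnb : Metric.closedBall z R ∈ nhds p :=
    Filter.mem_of_superset
      (Metric.isOpen_ball.mem_nhds (by simpa [Metric.mem_ball, dist_eq_norm] using hpr))
      Metric.ball_subset_closedBall
  have hloc : IsLocalMinOn h Set.univ p := by
    have hev : ∀ᶠ y in nhds p, h p ≤ h y :=
      Filter.eventually_of_mem hnb fun y hy => hpmin hy
    simpa [IsLocalMinOn, IsMinFilter, nhdsWithin_univ] using hev
  have hmin := IsMinOn.of_isLocalMinOn_of_convexOn (Set.mem_univ p) hloc hconv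
  exact ⟨p, fun y => hmin (Set.mem_univ y)⟩


lemma proxPt_spec {n : ℕ} (φ : EuclideanSpace ℝ (Fin n) → ℝ)
    (hφ : ConvexOn ℝ Set.univ φ) (z : EuclideanSpace ℝ (Fin n)) :
    ∀ y, φ (proxPt φ z) + (1 / 2) * ‖proxPt φ z - z‖ ^ 2
      ≤ φ y + (1 / 2) * ‖y - z‖ ^ 2 :=
  Classical.epsilon_spec (proxPt_exists φ hφ z)

lemma proxPt_subgrad {n : ℕ} (φ : EuclideanSpace ℝ (Fin n) → ℝ)
    (hφ : ConvexOn ℝ Set.univ φ) (z y : EuclideanSpace ℝ (Fin n)) :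
    ⟪z - proxPt φ z, y - proxPt φ z⟫ ≤ φ y - φ (proxPt φ z) := by
  set p := proxPt φ z with hpdef
  have hp := proxPt_spec φ hφ z
  have hip : ⟪z - p, y - p⟫ = -⟪p - z, y - p⟫ := by
    rw [show z - p = -(p - z) from by abel, inner_neg_left]
  rw [hip]
  refine le_of_forall_pos_le_add fun ε hε => ?_
  set s : ℝ := ‖y - p‖ ^ 2 with hs
  have hs0 : 0 ≤ s := sq_nonneg _
  set t : ℝ := min 1 (2 * ε / (s + 1)) with ht
  have ht0 : 0 < t := lt_min one_pos (by positivity)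
  have ht1 : t ≤ 1 := min_le_left _ _
  have hts : t * s ≤ 2 * ε := by
    have h1 : t * s ≤ (2 * ε / (s + 1)) * s :=
      mul_le_mul_of_nonneg_right (min_le_right _ _) hs0
    have h2 : (2 * ε / (s + 1)) * s ≤ 2 * ε := by
      rw [div_mul_eq_mul_div, div_le_iff₀ (by linarith : (0:ℝ) < s + 1)]
      nlinarith
    linarith
  set w := p + t • (y - p) with hw
  have h1 := hp w
  have hcv : φ w ≤ φ p + t * (φ y - φ p) := by
    have hweq : w = (1 - t) • p + t • y := by
      rw [hw, sub_smul, one_smul, smul_sub]; abel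
    calc φ w ≤ (1 - t) * φ p + t * φ y := by
          rw [hweq]
          exact hφ.2 (Set.mem_univ p) (Set.mem_univ y) (by linarith) ht0.le (by ring)
      _ = φ p + t * (φ y - φ p) := by ring
  have hnorm : ‖w - z‖ ^ 2 = ‖p - z‖ ^ 2 + 2 * (t * ⟪p - z, y - p⟫) + t ^ 2 * s := by
    have hwz : w - z = (p - z) + t • (y - p) := by rw [hw]; abel
    rw [hwz, norm_add_sq_real, real_inner_smul_right, norm_smul, Real.norm_eq_abs,
      abs_of_pos ht0, hs]
    ring
  rw [hnorm] at h1
  have h0 : 0 ≤ t * ((φ y - φ p) + ⟪p - z, y - p⟫ + t / 2 * s) := by nlinarith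
  have hA : 0 ≤ (φ y - φ p) + ⟪p - z, y - p⟫ + t / 2 * s := by
    by_contra hA
    push_neg at hA
    nlinarith [mul_pos ht0 (neg_pos.2 hA)]
  nlinarith

lemma scalar_bounds (μ θ γ a b ρ : ℝ) (hμ : 0 < μ) (hθ0 : 0 < θ) (hθ1 : θ < 1)
    (hγ : 0 ≤ γ) (ha : 0 ≤ a) (hb : 0 ≤ b) (hρ : 0 ≤ ρ)
    (hmain : μ * a ^ 2 + b ^ 2 ≤ (1 + γ) * a * b)
    (hb1 : b ≤ ρ + θ * ρ) (hrb : ρ ≤ θ * ρ + b) :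
    μ / ((1 + γ) * (1 + θ)) * a ≤ ρ ∧ ρ ≤ (1 + γ) / (1 - θ) * a := by
  constructor
  · rw [div_mul_eq_mul_div, div_le_iff₀ (mul_pos (by linarith) (by linarith))]
    nlinarith [mul_le_mul_of_nonneg_left hb1 (mul_nonneg (by linarith : (0:ℝ) ≤ 1 + γ) ha),
      mul_nonneg hρ (mul_nonneg (by linarith : (0:ℝ) ≤ 1 + γ) (by linarith : (0:ℝ) ≤ 1 + θ)),
      sq_nonneg b]
  · rw [div_mul_eq_mul_div, le_div_iff₀ (by linarith : (0:ℝ) < 1 - θ)]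
    have hb2 : ρ * (1 - θ) ≤ b := by linarith
    rcases hb.eq_or_lt with hb0 | hb0
    · nlinarith [mul_nonneg (mul_nonneg (by linarith : (0:ℝ) ≤ 1 + γ) ha) hρ,
        mul_nonneg (by linarith : (0:ℝ) ≤ 1 + γ) ha]
    · have hble : b ≤ (1 + γ) * a := by
        have h6 : b * b ≤ ((1 + γ) * a) * b := by nlinarith [mul_nonneg hμ.le (sq_nonneg a)]
        exact le_of_mul_le_mul_right h6 hb0
      linarith


/-- If `‖R(x̂)‖ ≤ θ‖r(x)‖` with `θ ∈ (0,1)`, where `r(x) = x − prox_φ(x − ∇f(x))` and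
`R(x̂) = x̂ − prox_φ(x̂ − ∇f(x) − G d)` with `d = x̂ − x` and `G` symmetric and `μ`-coercive,
then `(μ/((1+‖G‖)(1+θ)))‖d‖ ≤ ‖r(x)‖ ≤ ((1+‖G‖)/(1−θ))‖d‖`. -/
theorem stmt_5 {n : ℕ} (f φ : EuclideanSpace ℝ (Fin n) → ℝ)
    (hφ : ConvexOn ℝ Set.univ φ)
    (x : EuclideanSpace ℝ (Fin n)) (gx : EuclideanSpace ℝ (Fin n))
    (hf : HasGradientAt f gx x)
    (G : EuclideanSpace ℝ (Fin n) →L[ℝ] EuclideanSpace ℝ (Fin n))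
    (hGsym : ∀ u v, ⟪G u, v⟫ = ⟪u, G v⟫)
    (μ : ℝ) (hμ : 0 < μ) (hGcoer : ∀ d, μ * ‖d‖ ^ 2 ≤ ⟪d, G d⟫)
    (xhat d : EuclideanSpace ℝ (Fin n)) (hd : d = xhat - x)
    (rx Rxhat : EuclideanSpace ℝ (Fin n))
    (hrx : rx = x - proxPt φ (x - gx))
    (hR : Rxhat = xhat - proxPt φ (xhat - gx - G d))
    (θ : ℝ) (hθ0 : 0 < θ) (hθ1 : θ < 1)
    (hin : ‖Rxhat‖ ≤ θ * ‖rx‖) :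
    μ / ((1 + ‖G‖) * (1 + θ)) * ‖d‖ ≤ ‖rx‖ ∧ ‖rx‖ ≤ (1 + ‖G‖) / (1 - θ) * ‖d‖ := by
  set p := proxPt φ (x - gx) with hpdef
  set q := proxPt φ (xhat - gx - G d) with hqdef
  have h1 := proxPt_subgrad φ hφ (x - gx) q
  have h2 := proxPt_subgrad φ hφ (xhat - gx - G d) p
  set e := rx - Rxhat with he
  have hpe : p = x - rx := by rw [hrx]; abel
  have hqe : q = xhat - Rxhat := by rw [hR]; abel
  have e1 : x - gx - p = rx - gx := by rw [hpe]; abel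
  have e2 : xhat - gx - G d - q = Rxhat - gx - G d := by rw [hqe]; abel
  have e3 : q - p = d + e := by rw [hpe, hqe, he, hd]; abel
  have e4 : p - q = -(d + e) := by rw [← e3]; abel
  rw [e1, e3] at h1
  rw [e2, e4, inner_neg_right] at h2
  have hsum : ⟪rx - gx - (Rxhat - gx - G d), d + e⟫ ≤ 0 := by
    rw [inner_sub_left]; linarith
  have hee : rx - gx - (Rxhat - gx - G d) = e + G d := by rw [he]; abel
  rw [hee, inner_add_left, inner_add_right, inner_add_right] at hsum
  -- hsum : ⟪e,d⟫ + ⟪e,e⟫ + (⟪G d,d⟫ + ⟪G d,e⟫) ≤ 0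
  have hGdd : ⟪G d, d⟫ = ⟪d, G d⟫ := real_inner_comm _ _
  have hμd := hGcoer d
  have hed : -(‖e‖ * ‖d‖) ≤ ⟪e, d⟫ := neg_le_of_abs_le (abs_real_inner_le_norm e d)
  have hGe : -(‖G‖ * ‖d‖ * ‖e‖) ≤ ⟪G d, e⟫ := by
    have h3 : |⟪G d, e⟫| ≤ ‖G d‖ * ‖e‖ := abs_real_inner_le_norm _ _
    have h4 : ‖G d‖ * ‖e‖ ≤ ‖G‖ * ‖d‖ * ‖e‖ :=
      mul_le_mul_of_nonneg_right (G.le_opNorm d) (norm_nonneg e)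
    have := neg_le_of_abs_le h3
    linarith
  have hee2 : ⟪e, e⟫ = ‖e‖ ^ 2 := real_inner_self_eq_norm_sq e
  have hmain : μ * ‖d‖ ^ 2 + ‖e‖ ^ 2 ≤ (1 + ‖G‖) * ‖d‖ * ‖e‖ := by nlinarith
  -- scalar bookkeeping
  have hb : ‖e‖ ≤ ‖rx‖ + θ * ‖rx‖ := by
    have := norm_sub_le rx Rxhat
    rw [← he] at this
    linarith
  have hrb : ‖rx‖ ≤ θ * ‖rx‖ + ‖e‖ := by
    have h5 : rx = Rxhat + e := by rw [he]; abel
    calc ‖rx‖ = ‖Rxhat + e‖ := by rw [← h5]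
      _ ≤ ‖Rxhat‖ + ‖e‖ := norm_add_le _ _
      _ ≤ θ * ‖rx‖ + ‖e‖ := by linarith
  have hG0 : (0:ℝ) ≤ ‖G‖ := norm_nonneg G
  have hd0 : (0:ℝ) ≤ ‖d‖ := norm_nonneg d
  have he0 : (0:ℝ) ≤ ‖e‖ := norm_nonneg e
  have hr0 : (0:ℝ) ≤ ‖rx‖ := norm_nonneg rx
  exact scalar_bounds μ θ ‖G‖ ‖d‖ ‖e‖ ‖rx‖ hμ hθ0 hθ1 hG0 hd0 he0 hr0 hmain hb hrb
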